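/- For x ∈ [0,1) and m ≥ 1, consider a two-sided SPRT with error probabilities α_k, β_k satisfying the Wald bounds α_k ≤ e^{−Δ}(1−β_k) and β_k ≤ e^{−Δ}(1−α_k) for some Δ > 0. Over the feasible region of (α_k, β_k), the function H(β_k, α_k) = β_k·log(β_k/(1−α_k)) + (1−β_k)·log((1−β_k)/α_k) is minimized at α_k = β_k = 1/(1+e^Δ), and its minimum value is Δ·tanh(Δ/2). -/

import Mathlib

noncomputable def Hfun (x y : ℝ) : ℝ :=
  x * Real.log (x / (1 - y)) + (1 - x) * Real.log ((1 - x) / y)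

lemma tanh_half_eq (Δ : ℝ) :
    Real.tanh (Δ / 2) = (Real.exp Δ - 1) / (Real.exp Δ + 1) := by
  have hs : Real.exp (Δ / 2) * Real.exp (Δ / 2) = Real.exp Δ := by
    rw [← Real.exp_add]; ring_nf
  have hs' : Real.exp (-(Δ / 2)) = (Real.exp (Δ / 2))⁻¹ := Real.exp_neg _
  have hpos : 0 < Real.exp (Δ / 2) := Real.exp_pos _
  rw [Real.tanh_eq_sinh_div_cosh, Real.sinh_eq, Real.cosh_eq, hs', ← hs]
  have h1 : 0 < Real.exp (Δ / 2) * Real.exp (Δ / 2) + 1 := by positivity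
  field_simp

set_option maxHeartbeats 1000000 in
theorem stmt_15 (Δ : ℝ) (hΔ : 0 < Δ) :
    (∀ a b : ℝ, 0 < a → a < 1 → 0 < b → b < 1 →
      a ≤ Real.exp (-Δ) * (1 - b) → b ≤ Real.exp (-Δ) * (1 - a) →
      Δ * Real.tanh (Δ / 2) ≤ Hfun b a) ∧
    Hfun (1 / (1 + Real.exp Δ)) (1 / (1 + Real.exp Δ)) = Δ * Real.tanh (Δ / 2) := by
  set E := Real.exp Δ with hE
  have hEpos : 0 < E := Real.exp_pos _
  have hE1 : 1 < E := by rw [hE]; exact Real.one_lt_exp_iff.mpr hΔ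
  have hEne : E ≠ 0 := ne_of_gt hEpos
  have hu : Real.exp (-Δ) = E⁻¹ := Real.exp_neg _
  have htanh : Real.tanh (Δ / 2) = (E - 1) / (E + 1) := tanh_half_eq Δ
  constructor
  · intro a b ha0 ha1 hb0 hb1 hc1 hc2
    rw [hu] at hc1 hc2
    have hlog : ∀ t : ℝ, 0 < t → 1 - t⁻¹ ≤ Real.log t := fun t ht =>
      Real.one_sub_inv_le_log_of_pos ht
    have hb1a : (0:ℝ) < 1 - a := by linarith
    have hb1b : (0:ℝ) < 1 - b := by linarith
    -- first term: b * log (b/(1-a)) ≥ -Δ*b + b - (1-a)/E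
    have t1 : -Δ * b + b - (1 - a) / E ≤ b * Real.log (b / (1 - a)) := by
      have ht : 0 < b * E / (1 - a) := by positivity
      have h := hlog _ ht
      have hsplit : Real.log (b / (1 - a)) = Real.log (b * E / (1 - a)) - Δ := by
        rw [show b * E / (1 - a) = (b / (1 - a)) * E by ring,
          Real.log_mul (by positivity) (by positivity), hE, Real.log_exp]
        ring
      have hinv : (b * E / (1 - a))⁻¹ = (1 - a) / (b * E) := by
        field_simp
      rw [hsplit]
      have h2 : b * (1 - (1 - a) / (b * E)) ≤ b * Real.log (b * E / (1 - a)) := by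
        apply mul_le_mul_of_nonneg_left _ (le_of_lt hb0)
        rw [← hinv]; exact h
      have h3 : b * (1 - (1 - a) / (b * E)) = b - (1 - a) / E := by
        field_simp
      nlinarith [h2, h3]
    -- second term: (1-b) * log ((1-b)/a) ≥ Δ*(1-b) + (1-b) - E*a
    have t2 : Δ * (1 - b) + (1 - b) - E * a ≤ (1 - b) * Real.log ((1 - b) / a) := by
      have ht : 0 < (1 - b) / (a * E) := by positivity
      have h := hlog _ ht
      have hsplit : Real.log ((1 - b) / a) = Real.log ((1 - b) / (a * E)) + Δ := by
        rw [show (1 - b) / (a * E) = ((1 - b) / a) * E⁻¹ by ring,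
          Real.log_mul (by positivity) (by positivity), Real.log_inv, hE, Real.log_exp]
        ring
      have hinv : ((1 - b) / (a * E))⁻¹ = a * E / (1 - b) := by field_simp
      rw [hsplit]
      have h2 : (1 - b) * (1 - a * E / (1 - b)) ≤ (1 - b) * Real.log ((1 - b) / (a * E)) := by
        apply mul_le_mul_of_nonneg_left _ (le_of_lt hb1b)
        rw [← hinv]; exact h
      have h3 : (1 - b) * (1 - a * E / (1 - b)) = (1 - b) - a * E := by
        field_simp
      nlinarith [h2, h3]
    rw [Hfun, htanh]
    -- exp inequalities
    have he1 : 1 + 2*Δ ≤ E * E := by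
      have h1 := Real.add_one_le_exp (2*Δ)
      have h2 : Real.exp (2*Δ) = E * E := by rw [hE, ← Real.exp_add]; ring_nf
      linarith [h2 ▸ h1]
    have he2 : E * E * (1 - 2*Δ) ≤ 1 := by
      have h1 := Real.add_one_le_exp (-(2*Δ))
      have h2 : Real.exp (-(2*Δ)) * (E * E) = 1 := by
        rw [hE, ← Real.exp_add, ← Real.exp_add]; ring_nf; exact Real.exp_zero
      nlinarith [h1, h2, mul_pos hEpos hEpos]
    -- constraints in polynomial form
    have hid : E⁻¹ * E = 1 := inv_mul_cancel₀ hEne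
    have hc1' : a * E ≤ 1 - b := by
      have h := mul_le_mul_of_nonneg_right hc1 (le_of_lt hEpos)
      have : E⁻¹ * (1 - b) * E = 1 - b := by field_simp
      linarith [this ▸ h]
    have hc2' : b * E ≤ 1 - a := by
      have h := mul_le_mul_of_nonneg_right hc2 (le_of_lt hEpos)
      have : E⁻¹ * (1 - a) * E = 1 - a := by field_simp
      linarith [this ▸ h]
    -- the linear KKT inequality
    have hgoal : Δ * ((E - 1) / (E + 1)) ≤
        -Δ * b + b - (1 - a) / E + (Δ * (1 - b) + (1 - b) - E * a) := by
      have hsum : 0 ≤ E * (E*E - 1 - 2*Δ) * (1 - b - a*E)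
          + (2*Δ*E*E - E*E + 1) * (1 - a - b*E) := by
        have p1 : 0 ≤ E * (E*E - 1 - 2*Δ) * (1 - b - a*E) := by
          apply mul_nonneg (mul_nonneg (le_of_lt hEpos) (by linarith)) (by linarith)
        have p2 : 0 ≤ (2*Δ*E*E - E*E + 1) * (1 - a - b*E) := by
          apply mul_nonneg (by nlinarith) (by linarith)
        linarith
      have hEp1 : E + 1 ≠ 0 := by positivity
      set w := (1 - a) / E with hwdef
      set v := (E - 1) / (E + 1) with hvdef
      have hw : E * w = 1 - a := by rw [hwdef]; field_simp
      have hv : v * (E + 1) = E - 1 := by rw [hvdef]; field_simp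
      have hid2 : ((-Δ * b + b - w + (Δ * (1 - b) + (1 - b) - E * a))
            - Δ * v) * ((E*E - 1) * E)
          = E * (E*E - 1 - 2*Δ) * (1 - b - a*E) + (2*Δ*E*E - E*E + 1) * (1 - a - b*E) := by
        linear_combination (-(E*E - 1)) * hw + (-(Δ * E * (E - 1))) * hv
      have hfac : 0 < (E*E - 1) * E := by nlinarith
      nlinarith [hsum, hid2, hfac]
    linarith [t1, t2, hgoal]
  · rw [Hfun, htanh]
    have h1 : (0:ℝ) < 1 + E := by linarith
    have h1ne : (1:ℝ) + E ≠ 0 := ne_of_gt h1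
    have hc : (1:ℝ) - 1 / (1 + E) = E / (1 + E) := by field_simp; ring
    have hl1 : Real.log ((1 / (1 + E)) / (1 - 1 / (1 + E))) = -Δ := by
      rw [hc, show (1 / (1 + E)) / (E / (1 + E)) = E⁻¹ by field_simp,
        Real.log_inv, hE, Real.log_exp]
    have hl2 : Real.log ((1 - 1 / (1 + E)) / (1 / (1 + E))) = Δ := by
      rw [hc, show (E / (1 + E)) / (1 / (1 + E)) = E by field_simp, hE, Real.log_exp]
    rw [hl1, hl2, hc]
    field_simp
    ring
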